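/- Let p be a prime and P a finite p-group such that the quotient P/Φ(P) of P by its Frattini subgroup has order p^2 (equivalently, P is 2-generated and noncyclic). Let A be a subgroup of the automorphism group Aut(P) that does not have a normal Sylow p-subgroup. Then A acts transitively on the set of maximal subgroups of P: for any two maximal subgroups M and M' of P there exists α ∈ A with α(M) = M'. In particular, all maximal subgroups of P are isomorphic. -/

import Mathlib

open Subgroup

section Helpers

variable {G H : Type*} [Group G] [Group H]

lemma finiteMulAut (G : Type*) [Group G] [Finite G] : Finite (MulAut G) :=
  Finite.of_injective (fun e => (e : G → G)) fun a b h => by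
    ext x; exact congrFun h x

lemma isCoatom_map_of_surjective (f : G →* H) (hs : Function.Surjective f)
    {M : Subgroup G} (hk : f.ker ≤ M) (h : IsCoatom M) : IsCoatom (M.map f) := by
  constructor
  · intro ht
    have := congrArg (Subgroup.comap f) ht
    rw [Subgroup.comap_map_eq_self hk, Subgroup.comap_top] at this
    exact h.1 this
  · intro B hB
    have h1 : M ≤ B.comap f := by
      rw [← Subgroup.comap_map_eq_self hk]
      exact Subgroup.comap_mono hB.le
    have hne : M ≠ B.comap f := by
      intro he
      have : M.map f = B := by
        rw [he, Subgroup.map_comap_eq_self_of_surjective hs]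
      exact hB.ne this
    have h2 := h.2 (B.comap f) (lt_of_le_of_ne h1 hne)
    have h3 := congrArg (Subgroup.map f) h2
    rwa [Subgroup.map_comap_eq_self_of_surjective hs,
      Subgroup.map_top_of_surjective f hs] at h3

end Helpers

section Fbar

variable {P : Type*} [Group P]

/-- The natural map from automorphisms of `P` to automorphisms of `P ⧸ frattini P`. -/
noncomputable def fbar : MulAut P →* MulAut (P ⧸ frattini P) :=
  MonoidHom.mk' (fun α => QuotientGroup.congr (frattini P) (frattini P) α
    (Subgroup.characteristic_iff_map_eq.mp inferInstance α))
    (by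
      intro a b
      ext x
      induction x using QuotientGroup.induction_on with
      | H x => rfl)

lemma fbar_mk (α : MulAut P) (x : P) :
    fbar α (QuotientGroup.mk x) = QuotientGroup.mk (α x) :=
  QuotientGroup.congr_mk _ _ _ (Subgroup.characteristic_iff_map_eq.mp inferInstance α) x

end Fbar

open Subgroup

section Burnside

variable {P : Type*} [Group P]

/-- Automorphisms acting trivially modulo the Frattini subgroup. -/
def derAut (P : Type*) [Group P] : Subgroup (MulAut P) where
  carrier := {α | ∀ x : P, α x * x⁻¹ ∈ frattini P}
  one_mem' := by
    intro x
    simpa using (frattini P).one_mem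
  mul_mem' := by
    intro a b ha hb x
    have h := mul_mem (ha (b x)) (hb x)
    have e : a (b x) * (b x)⁻¹ * (b x * x⁻¹) = (a * b) x * x⁻¹ := by
      rw [MulAut.mul_apply]; group
    rwa [e] at h
  inv_mem' := by
    intro a ha x
    have h := ha (a⁻¹ x)
    have e : a (a⁻¹ x) = x := by
      rw [MulAut.inv_def]; exact a.apply_symm_apply x
    rw [e] at h
    have := inv_mem h
    simpa using this

variable [Finite P] {p : ℕ} [Fact p.Prime]

lemma derAut_eq_one (hpgrp : IsPGroup p P) {β : MulAut P} (hβ : β ∈ derAut P)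
    {q : ℕ} (hq : q.Prime) (hqp : q ≠ p) (hβq : β ^ q = 1) : β = 1 := by
  classical
  let C : Subgroup P :=
    { carrier := {x | β x = x}
      one_mem' := map_one β
      mul_mem' := fun {a b} ha hb => by
        simp only [Set.mem_setOf_eq] at *
        rw [map_mul, ha, hb]
      inv_mem' := fun {a} ha => by
        simp only [Set.mem_setOf_eq] at *
        rw [map_inv, ha] }
  have hCtop : C ⊔ frattini P = ⊤ := by
    rw [eq_top_iff']
    intro x
    let T := {y : P // x⁻¹ * y ∈ frattini P}
    let Z := Subgroup.zpowers β
    have hZD : Z ≤ derAut P := (Subgroup.zpowers_le).mpr hβ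
    letI action : MulAction Z T :=
      { smul := fun g t => ⟨(g : MulAut P) t, by
          have h1 : (g : MulAut P) t * (t : P)⁻¹ ∈ frattini P := hZD g.2 (t : P)
          have e : x⁻¹ * ((g : MulAut P) t) =
              (x⁻¹ * ((g : MulAut P) t * (t : P)⁻¹) * (x⁻¹)⁻¹) * (x⁻¹ * t) := by group
          rw [e]
          exact mul_mem (Subgroup.Normal.conj_mem inferInstance _ h1 x⁻¹) t.2⟩
        one_smul := fun t => Subtype.ext rfl
        mul_smul := fun g h t => Subtype.ext rfl }
    haveI : Finite T := Subtype.finite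
    have hZq : IsPGroup q Z := by
      intro g
      obtain ⟨j, hj⟩ := Subgroup.mem_zpowers_iff.mp g.2
      refine ⟨1, ?_⟩
      have hc : ((g : MulAut P)) ^ (q ^ 1) = 1 := by
        rw [pow_one, ← hj, ← zpow_natCast, ← zpow_mul, mul_comm, zpow_mul, zpow_natCast, hβq,
          one_zpow]
      exact Subtype.ext (by rw [SubgroupClass.coe_pow, hc, OneMemClass.coe_one])
    haveI : Fact q.Prime := ⟨hq⟩
    have hmod := hZq.card_modEq_card_fixedPoints T
    have hcardT : Nat.card T = Nat.card (frattini P) := Nat.card_congr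
      { toFun := fun t => ⟨x⁻¹ * t, t.2⟩
        invFun := fun φ => ⟨x * φ, by simp⟩
        left_inv := fun t => Subtype.ext (by simp)
        right_inv := fun φ => Subtype.ext (by simp) }
    obtain ⟨m, hm⟩ := (IsPGroup.iff_card).mp (hpgrp.to_subgroup (frattini P))
    have hne : Nat.card (MulAction.fixedPoints Z T) ≠ 0 := by
      intro h0
      rw [hcardT, hm, h0] at hmod
      have hdvd : q ∣ p ^ m := (Nat.modEq_zero_iff_dvd).mp hmod
      exact hqp ((Nat.prime_dvd_prime_iff_eq hq Fact.out).mp (hq.dvd_of_dvd_pow hdvd))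
    obtain ⟨⟨⟨y, hy⟩, hfix⟩⟩ := (Nat.card_ne_zero.mp hne).1
    have hβy : β y = y := by
      have h := (MulAction.mem_fixedPoints).mp hfix ⟨β, Subgroup.mem_zpowers β⟩
      exact congrArg Subtype.val h
    have hyx : y⁻¹ * x ∈ frattini P := by simpa using inv_mem hy
    have e : x = y * (y⁻¹ * x) := by group
    rw [e]
    exact mul_mem (le_sup_left (α := Subgroup P) (show y ∈ C from hβy))
      (le_sup_right (α := Subgroup P) hyx)
  have hC : C = ⊤ := frattini_nongenerating hCtop
  apply DFunLike.ext β 1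
  intro x
  have hx : x ∈ C := hC ▸ Subgroup.mem_top x
  exact hx

lemma ker_fbar_le_derAut : (fbar (P := P)).ker ≤ derAut P := by
  intro α hα x
  have h1 : fbar α (QuotientGroup.mk x) = QuotientGroup.mk x := by
    rw [MonoidHom.mem_ker] at hα
    rw [hα]; rfl
  rw [fbar_mk] at h1
  have h2 : (α x)⁻¹ * x ∈ frattini P := (QuotientGroup.eq).mp h1
  have h3 := Subgroup.Normal.conj_mem inferInstance _ h2 (α x)
  have h4 : α x * ((α x)⁻¹ * x) * (α x)⁻¹ = x * (α x)⁻¹ := by group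
  rw [h4] at h3
  simpa using inv_mem h3

lemma ker_fbar_isPGroup (hpgrp : IsPGroup p P) : IsPGroup p (fbar (P := P)).ker := by
  haveI := finiteMulAut P
  intro g
  have hβ₀ : (↑g : MulAut P) ∈ derAut P := ker_fbar_le_derAut g.2
  have hn : orderOf (↑g : MulAut P) ≠ 0 := (orderOf_pos _).ne'
  have hall : ∀ {q : ℕ}, q.Prime → q ∣ orderOf (↑g : MulAut P) → q = p := by
    intro q hq hdvd
    by_contra hqp
    have hord : orderOf ((↑g : MulAut P) ^ (orderOf (↑g : MulAut P) / q)) = q :=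
      orderOf_pow_orderOf_div hn hdvd
    have h1 : (↑g : MulAut P) ^ (orderOf (↑g : MulAut P) / q) ∈ derAut P := pow_mem hβ₀ _
    have h2 := derAut_eq_one hpgrp h1 hq hqp (by
      have hp1 := pow_orderOf_eq_one ((↑g : MulAut P) ^ (orderOf (↑g : MulAut P) / q))
      rwa [hord] at hp1)
    rw [h2, orderOf_one] at hord
    exact hq.one_lt.ne' hord.symm
  have hpow := Nat.eq_prime_pow_of_unique_prime_dvd hn (fun {d} hd hdvd => hall hd hdvd)
  refine ⟨(orderOf (↑g : MulAut P)).primeFactorsList.length, Subtype.ext ?_⟩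
  rw [SubgroupClass.coe_pow, OneMemClass.coe_one, ← hpow]
  exact pow_orderOf_eq_one _

end Burnside

open Subgroup

section Transfer

variable {G H : Type*} [Group G] [Group H] [Finite G] [Finite H] {p : ℕ} [Fact p.Prime]

lemma pclosed_of_surjective (g : G →* H) (hsurj : Function.Surjective g)
    (hker : IsPGroup p g.ker) (Sb : Sylow p H) (hn : (Sb : Subgroup H).Normal) :
    ∃ S : Sylow p G, (S : Subgroup G).Normal := by
  set N : Subgroup G := (Sb : Subgroup H).comap g with hN
  have hNnorm : N.Normal := hn.comap g
  have hNp : IsPGroup p N := IsPGroup.comap_of_ker_isPGroup Sb.2 g hker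
  have hidx : N.index = (Sb : Subgroup H).index := Subgroup.index_comap_of_surjective _ hsurj
  have hnd : ¬ p ∣ N.index := by
    rw [hidx]
    exact Sylow.not_dvd_index Sb
  obtain ⟨S, hNS⟩ := hNp.exists_le_sylow
  obtain ⟨n, hn'⟩ := (IsPGroup.iff_card).mp hNp
  obtain ⟨s, hs⟩ := (IsPGroup.iff_card).mp S.2
  have hdvd : Nat.card (S : Subgroup G) ∣ Nat.card N * N.index := by
    rw [Subgroup.card_mul_index]
    exact Subgroup.card_subgroup_dvd_card _
  rw [hn', hs] at hdvd
  have hcop : (p ^ s).Coprime N.index :=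
    Nat.Coprime.pow_left s ((Fact.out : p.Prime).coprime_iff_not_dvd.mpr hnd)
  have hdvd2 : p ^ s ∣ p ^ n := hcop.dvd_of_dvd_mul_right hdvd
  have hle : Nat.card (S : Subgroup G) ≤ Nat.card N := by
    rw [hn', hs]
    exact Nat.le_of_dvd (pow_pos (Fact.out : p.Prime).pos n) hdvd2
  have heq : N = (S : Subgroup G) := Subgroup.eq_of_le_of_card_ge hNS hle
  exact ⟨S, by rw [← heq]; exact hNnorm⟩

end Transfer

open Subgroup

section VSide

variable {V : Type*} [CommGroup V] [Finite V] {p : ℕ} [hp : Fact p.Prime]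

/-- The "derivation" homomorphism `v ↦ σ v * v⁻¹` of a commutative group. -/
def dmap (σ : MulAut V) : V →* V where
  toFun v := σ v * v⁻¹
  map_one' := by simp
  map_mul' a b := by
    simp only [map_mul, mul_inv_rev]
    simp [mul_comm, mul_left_comm, mul_assoc]

lemma dmap_apply (σ : MulAut V) (v : V) : dmap σ v = σ v * v⁻¹ := rfl

lemma mem_ker_dmap {σ : MulAut V} {v : V} : v ∈ (dmap σ).ker ↔ σ v = v := by
  rw [MonoidHom.mem_ker, dmap_apply, mul_inv_eq_one]

lemma card_line {x : V} (hx : x ≠ 1) (hxp : x ^ p = 1) : Nat.card (zpowers x) = p := by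
  rw [Nat.card_zpowers]
  exact orderOf_eq_prime hxp hx

lemma eq_zpowers_of_card {W : Subgroup V} (hW : Nat.card W = p) {x : V} (hx : x ∈ W)
    (hx1 : x ≠ 1) : W = zpowers x := by
  have hxp : x ^ p = 1 := by
    have h := orderOf_dvd_natCard (⟨x, hx⟩ : W)
    rw [hW, ← Subgroup.orderOf_coe] at h
    exact orderOf_dvd_iff_pow_eq_one.mp h
  exact (Subgroup.eq_of_le_of_card_ge (zpowers_le.mpr hx)
    (by rw [hW, card_line hx1 hxp])).symm

lemma p_ne_psq : p ≠ p ^ 2 := by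
  have h := hp.out.one_lt
  nlinarith [sq_nonneg p]

variable (hV : Nat.card V = p ^ 2)

include hV in
lemma coatom_iff_card {W : Subgroup V} : IsCoatom W ↔ Nat.card W = p := by
  have hdvd : Nat.card W ∣ p ^ 2 := hV ▸ Subgroup.card_subgroup_dvd_card W
  constructor
  · rintro ⟨hne, hmax⟩
    obtain ⟨k, hk2, hkeq⟩ := (Nat.dvd_prime_pow hp.out).mp hdvd
    interval_cases k
    · exfalso
      have hW : W = ⊥ := Subgroup.card_eq_one.mp (by simpa using hkeq)
      obtain ⟨x, hx⟩ := exists_prime_orderOf_dvd_card' (G := V) p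
        (by rw [hV]; exact dvd_pow_self p two_ne_zero)
      have h1 : zpowers x ≠ ⊥ := by
        intro hb
        have : x = 1 := by
          have := Subgroup.mem_zpowers x
          rw [hb, Subgroup.mem_bot] at this
          exact this
        rw [this, orderOf_one] at hx
        exact hp.out.one_lt.ne' hx.symm
      have h2 := hmax (zpowers x) (hW ▸ bot_lt_iff_ne_bot.mpr h1)
      have h3 : orderOf x = Nat.card V := by
        rw [← Nat.card_zpowers, h2]
        exact Subgroup.card_top
      rw [hx, hV] at h3
      exact p_ne_psq h3
    · simpa using hkeq
    · exfalso
      exact hne (Subgroup.eq_top_of_card_eq _ (hkeq.trans hV.symm))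
  · intro hcard
    constructor
    · intro htop
      rw [htop, Subgroup.card_top, hV] at hcard
      exact p_ne_psq hcard.symm
    · intro B hWB
      have hBdvd : Nat.card B ∣ p ^ 2 := hV ▸ Subgroup.card_subgroup_dvd_card B
      obtain ⟨k, hk2, hkeq⟩ := (Nat.dvd_prime_pow hp.out).mp hBdvd
      interval_cases k
      · exfalso
        have hB : B = ⊥ := Subgroup.card_eq_one.mp (by simpa using hkeq)
        have : W = ⊥ := le_bot_iff.mp (hB ▸ hWB.le)
        rw [this, Subgroup.card_bot] at hcard
        exact hp.out.one_lt.ne' hcard.symm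
      · exfalso
        apply hWB.ne
        exact Subgroup.eq_of_le_of_card_ge hWB.le (by rw [hcard, hkeq, pow_one])
      · exact Subgroup.eq_top_of_card_eq _ (hkeq.trans hV.symm)



lemma sigma_pow_apply {σ : MulAut V} (h2 : ∀ v : V, σ (dmap σ v) = dmap σ v) :
    ∀ (m : ℕ) (v : V), (σ ^ m) v = v * (dmap σ v) ^ m := by
  intro m
  induction m with
  | zero => intro v; simp
  | succ m ih =>
    intro v
    have hσv : σ v = v * dmap σ v := by
      rw [dmap_apply, mul_comm (σ v), mul_inv_cancel_left]
    rw [pow_succ', MulAut.mul_apply, ih, map_mul, map_pow, h2, hσv, pow_succ' (dmap σ v) m,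
      mul_assoc]

include hV in
lemma sigma_struct (hexp : ∀ v : V, v ^ p = 1) {σ : MulAut V} (hσ1 : σ ≠ 1)
    (hpel : ∃ k, σ ^ p ^ k = 1) :
    Nat.card (dmap σ).ker = p ∧ (dmap σ).range = (dmap σ).ker ∧ σ ^ p = 1 := by
  classical
  obtain ⟨k, hk⟩ := hpel
  set K := (dmap σ).ker with hKdef
  have hKtop : K ≠ ⊤ := by
    intro h
    apply hσ1
    apply DFunLike.ext _ _ (fun v => ?_)
    have hv : v ∈ K := h ▸ Subgroup.mem_top v
    simpa using mem_ker_dmap.mp hv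
  have hZp : IsPGroup p (zpowers σ) := by
    intro g
    obtain ⟨j, hj⟩ := Subgroup.mem_zpowers_iff.mp g.2
    exact ⟨k, Subtype.ext (by
      rw [SubgroupClass.coe_pow, OneMemClass.coe_one, ← hj, ← zpow_natCast, ← zpow_mul,
        mul_comm, zpow_mul, zpow_natCast, hk, one_zpow])⟩
  have hfix : MulAction.fixedPoints (zpowers σ) V = (K : Set V) := by
    ext v
    simp only [MulAction.mem_fixedPoints, SetLike.mem_coe]
    constructor
    · intro h
      exact mem_ker_dmap.mpr (h ⟨σ, Subgroup.mem_zpowers σ⟩)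
    · intro hv g
      have hst : zpowers σ ≤ MulAction.stabilizer (MulAut V) v :=
        zpowers_le.mpr (by rw [MulAction.mem_stabilizer_iff]; exact mem_ker_dmap.mp hv)
      exact hst g.2
  have hcardmod := hZp.card_modEq_card_fixedPoints V
  have hfixcard : Nat.card (MulAction.fixedPoints (zpowers σ) V) = Nat.card K := by
    rw [hfix]; rfl
  have hpK : p ∣ Nat.card K := by
    have h1 : Nat.card K ≡ Nat.card V [MOD p] := by
      rw [← hfixcard]; exact hcardmod.symm
    have h2 : Nat.card K ≡ 0 [MOD p] := h1.trans (by rw [hV]; exact (Nat.modEq_zero_iff_dvd).mpr ⟨p, (sq p).symm ▸ rfl⟩)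
    exact (Nat.modEq_zero_iff_dvd).mp h2
  have hKdvd : Nat.card K ∣ p ^ 2 := hV ▸ Subgroup.card_subgroup_dvd_card K
  have hKcard : Nat.card K = p := by
    obtain ⟨j, hj2, hjeq⟩ := (Nat.dvd_prime_pow hp.out).mp hKdvd
    interval_cases j
    · exfalso
      rw [pow_zero] at hjeq
      rw [hjeq] at hpK
      exact hp.out.one_lt.ne' (Nat.dvd_one.mp hpK)
    · simpa using hjeq
    · exact absurd (Subgroup.eq_top_of_card_eq _ (hjeq.trans hV.symm)) hKtop
  have hrange : Nat.card (dmap σ).range = p := by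
    have h1 : Nat.card V = Nat.card (V ⧸ K) * Nat.card K :=
      Subgroup.card_eq_card_quotient_mul_card_subgroup K
    have h2 : Nat.card (V ⧸ K) = Nat.card (dmap σ).range :=
      Nat.card_congr (QuotientGroup.quotientKerEquivRange (dmap σ)).toEquiv
    rw [hV, hKcard, h2, sq] at h1
    exact (Nat.eq_of_mul_eq_mul_right hp.out.pos h1.symm)
  have hrk : (dmap σ).range ≤ K := by
    by_contra hcon
    obtain ⟨u, hu_mem, hu_not⟩ := SetLike.not_le_iff_exists.mp hcon
    have hu1 : u ≠ 1 := fun h => hu_not (h ▸ one_mem K)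
    have hrz : (dmap σ).range = zpowers u := eq_zpowers_of_card hrange hu_mem hu1
    have hdu : dmap σ u ∈ zpowers u := hrz ▸ ⟨u, rfl⟩
    obtain ⟨b0, hb0⟩ := (Submonoid.mem_powers_iff _ _).mp (mem_powers_iff_mem_zpowers.mpr hdu)
    set b := b0 + 1 with hbdef
    have hσu : σ u = u ^ b := by
      have h3 : σ u = u * dmap σ u := by
        rw [dmap_apply, mul_comm (σ u), mul_inv_cancel_left]
      rw [h3, ← hb0, ← pow_succ']
    have hiter : ∀ m : ℕ, (σ ^ m) u = u ^ b ^ m := by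
      intro m
      induction m with
      | zero => simp
      | succ m ih =>
        rw [pow_succ' σ m, MulAut.mul_apply, ih, map_pow, hσu, ← pow_mul, ← pow_succ']
    have hmain : u ^ b ^ p ^ k = u ^ 1 := by
      rw [← hiter, hk, pow_one]; rfl
    have horder : orderOf u = p := orderOf_eq_prime (hexp u) hu1
    have hmod : b ^ p ^ k ≡ 1 [MOD p] := by
      have h4 := (pow_eq_pow_iff_modEq).mp hmain
      rwa [horder] at h4
    have hzb : (b : ZMod p) = 1 := by
      have hcast : ((b ^ p ^ k : ℕ) : ZMod p) = ((1 : ℕ) : ZMod p) :=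
        (ZMod.natCast_eq_natCast_iff _ _ _).mpr hmod
      push_cast at hcast
      have hfrob : ∀ (x : ZMod p) (m : ℕ), x ^ p ^ m = x := by
        intro x m
        induction m with
        | zero => simp
        | succ m ih => rw [pow_succ, pow_mul, ih, ZMod.pow_card]
      rw [hfrob] at hcast
      rw [hbdef]
      push_cast
      simpa [hbdef] using hcast
    have hb1 : u ^ b = u ^ 1 := by
      rw [pow_eq_pow_iff_modEq, horder]
      exact (ZMod.natCast_eq_natCast_iff _ _ _).mp (by rw [hzb]; simp)
    have hfixu : σ u = u := by rw [hσu, hb1, pow_one]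
    exact hu_not (mem_ker_dmap.mpr hfixu)
  have hreq : (dmap σ).range = K :=
    Subgroup.eq_of_le_of_card_ge hrk (by rw [hKcard, hrange])
  have h2 : ∀ v : V, σ (dmap σ v) = dmap σ v := fun v =>
    mem_ker_dmap.mp (hrk ⟨v, rfl⟩)
  have hσp : σ ^ p = 1 := by
    apply DFunLike.ext _ _ (fun v => ?_)
    rw [sigma_pow_apply h2 p v, hexp, mul_one]
    rfl
  exact ⟨hKcard, hreq, hσp⟩

lemma exists_mem_ne_one_of_card {W : Subgroup V} (hW : Nat.card W = p) :
    ∃ x, x ∈ W ∧ x ≠ 1 := by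
  by_contra h
  push_neg at h
  have : W = ⊥ := by
    rw [eq_bot_iff]
    intro x hx
    rw [Subgroup.mem_bot]
    exact h x hx
  rw [this, Subgroup.card_bot] at hW
  exact hp.out.one_lt.ne' hW.symm

include hV in
lemma sigma_reach (hexp : ∀ v : V, v ^ p = 1) {σ : MulAut V} (hσ1 : σ ≠ 1)
    (hK : Nat.card (dmap σ).ker = p) (hrk : (dmap σ).range = (dmap σ).ker)
    {L L' : Subgroup V} (hL : IsCoatom L) (hL' : IsCoatom L')
    (hLC : L ≠ (dmap σ).ker) (hL'C : L' ≠ (dmap σ).ker) :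
    ∃ i : ℕ, Subgroup.map ((σ ^ i : MulAut V) : V →* V) L = L' := by
  classical
  have hLcard : Nat.card L = p := (coatom_iff_card hV).mp hL
  have hL'card : Nat.card L' = p := (coatom_iff_card hV).mp hL'
  have hKco : IsCoatom (dmap σ).ker := (coatom_iff_card hV).mpr hK
  -- pick a generator of L outside the kernel
  have hnle : ¬ L ≤ (dmap σ).ker := fun hle =>
    hLC (Subgroup.eq_of_le_of_card_ge hle (by rw [hK, hLcard]))
  obtain ⟨v, hvL, hvK⟩ := SetLike.not_le_iff_exists.mp hnle
  have hv1 : v ≠ 1 := fun h => hvK (h ▸ one_mem _)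
  have hLz : L = zpowers v := eq_zpowers_of_card hLcard hvL hv1
  -- w generates the kernel
  set w := dmap σ v with hwdef
  have hwK : w ∈ (dmap σ).ker := hrk ▸ ⟨v, rfl⟩
  have hw1 : w ≠ 1 := fun h => hvK (MonoidHom.mem_ker.mpr h)
  have hKz : (dmap σ).ker = zpowers w := eq_zpowers_of_card hK hwK hw1
  -- pick a generator of L' outside the kernel
  have hnle' : ¬ L' ≤ (dmap σ).ker := fun hle =>
    hL'C (Subgroup.eq_of_le_of_card_ge hle (by rw [hK, hL'card]))
  obtain ⟨v', hv'L, hv'K⟩ := SetLike.not_le_iff_exists.mp hnle'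
  have hv'1 : v' ≠ 1 := fun h => hv'K (h ▸ one_mem _)
  have hL'z : L' = zpowers v' := eq_zpowers_of_card hL'card hv'L hv'1
  -- decompose v'
  have hsup : zpowers v ⊔ (dmap σ).ker = ⊤ := by
    apply hKco.2
    refine lt_of_le_of_ne le_sup_right (fun h => hvK ?_)
    rw [h]
    exact Subgroup.mem_sup_left (mem_zpowers v)
  obtain ⟨y, hy, z, hz, hyz⟩ := Subgroup.mem_sup.mp (hsup ▸ Subgroup.mem_top v')
  obtain ⟨k0, hk0⟩ := (Submonoid.mem_powers_iff _ _).mp (mem_powers_iff_mem_zpowers.mpr hy)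
  obtain ⟨j0, hj0⟩ := (Submonoid.mem_powers_iff _ _).mp
    (mem_powers_iff_mem_zpowers.mpr (hKz ▸ hz))
  have hordv : orderOf v = p := orderOf_eq_prime (hexp v) hv1
  have hordw : orderOf w = p := orderOf_eq_prime (hexp w) hw1
  have hk0ne : (k0 : ZMod p) ≠ 0 := by
    intro h
    have hdvd : p ∣ k0 := (ZMod.natCast_eq_zero_iff _ _).mp h
    have : y = 1 := by
      rw [← hk0]
      exact orderOf_dvd_iff_pow_eq_one.mp (hordv ▸ hdvd)
    exact hv'K (by rw [← hyz, this, one_mul]; exact hz)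
  obtain ⟨i, hi⟩ := ZMod.natCast_zmod_surjective ((j0 : ZMod p) * (k0 : ZMod p)⁻¹)
  have h2 : ∀ x : V, σ (dmap σ x) = dmap σ x := fun x =>
    mem_ker_dmap.mp (hrk ▸ ⟨x, rfl⟩)
  have hkey : (σ ^ i) v = v * w ^ i := sigma_pow_apply h2 i v
  have hwik : w ^ (i * k0) = w ^ j0 := by
    rw [pow_eq_pow_iff_modEq, hordw]
    apply (ZMod.natCast_eq_natCast_iff _ _ _).mp
    push_cast
    rw [hi, mul_assoc, inv_mul_cancel₀ hk0ne, mul_one]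
  have hv'eq : ((σ ^ i) v) ^ k0 = v' := by
    rw [hkey, mul_pow, ← pow_mul, hwik, hk0, hj0, hyz]
  have hne1 : (σ ^ i) v ≠ 1 := by
    intro h
    exact hv1 ((σ ^ i).injective (by rw [h, map_one]))
  have hmap : Subgroup.map ((σ ^ i : MulAut V) : V →* V) L = zpowers ((σ ^ i) v) := by
    rw [hLz]
    exact MonoidHom.map_zpowers _ v
  refine ⟨i, ?_⟩
  rw [hmap, hL'z]
  symm
  apply Subgroup.eq_of_le_of_card_ge
  · rw [← hv'eq]
    exact zpowers_le.mpr (pow_mem (mem_zpowers _) k0)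
  · rw [card_line hv'1 (hexp v'), card_line hne1 (hexp _)]

include hV in
lemma eq_pow_of_same_ker (hexp : ∀ v : V, v ^ p = 1) {σ τ : MulAut V} (hσ1 : σ ≠ 1)
    (hτ1 : τ ≠ 1) (hστ : (dmap σ).ker = (dmap τ).ker)
    (hKσ : Nat.card (dmap σ).ker = p) (hrkσ : (dmap σ).range = (dmap σ).ker)
    (hrkτ : (dmap τ).range = (dmap τ).ker) :
    ∃ a : ℕ, τ = σ ^ a := by
  have hKco : IsCoatom (dmap σ).ker := (coatom_iff_card hV).mpr hKσ
  obtain ⟨v, hv⟩ : ∃ v : V, v ∉ (dmap σ).ker := by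
    by_contra h
    push_neg at h
    exact hKco.1 ((Subgroup.eq_top_iff' _).mpr h)
  set w := dmap σ v with hwdef
  have hwK : w ∈ (dmap σ).ker := hrkσ ▸ ⟨v, rfl⟩
  have hw1 : w ≠ 1 := fun h => hv (MonoidHom.mem_ker.mpr h)
  have hKz : (dmap σ).ker = zpowers w := eq_zpowers_of_card hKσ hwK hw1
  have hτv : dmap τ v ∈ zpowers w := by
    rw [← hKz, hστ, ← hrkτ]
    exact ⟨v, rfl⟩
  obtain ⟨a, ha⟩ := (Submonoid.mem_powers_iff _ _).mp (mem_powers_iff_mem_zpowers.mpr hτv)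
  have h2σ : ∀ x : V, σ (dmap σ x) = dmap σ x := fun x =>
    mem_ker_dmap.mp (hrkσ ▸ ⟨x, rfl⟩)
  refine ⟨a, ?_⟩
  have hsup : zpowers v ⊔ (dmap σ).ker = ⊤ := by
    apply hKco.2
    refine lt_of_le_of_ne le_sup_right (fun h => hv ?_)
    rw [h]
    exact Subgroup.mem_sup_left (mem_zpowers v)
  have hloc : zpowers v ⊔ (dmap σ).ker ≤
      MonoidHom.eqLocus (τ : V →* V) ((σ ^ a : MulAut V) : V →* V) := by
    apply sup_le
    · apply zpowers_le.mpr
      show τ v = (σ ^ a) v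
      have h3 : τ v = v * dmap τ v := by
        rw [dmap_apply, mul_comm (τ v), mul_inv_cancel_left]
      rw [sigma_pow_apply h2σ a v, h3, ← ha, hwdef]
    · intro x hx
      show τ x = (σ ^ a) x
      have hxτ : τ x = x := mem_ker_dmap.mp (hστ ▸ hx)
      have hxσ : (σ ^ a) x = x := by
        rw [sigma_pow_apply h2σ a x, MonoidHom.mem_ker.mp hx, one_pow, mul_one]
      rw [hxτ, hxσ]
  apply DFunLike.ext _ _ (fun x => ?_)
  have hx : x ∈ MonoidHom.eqLocus (τ : V →* V) ((σ ^ a : MulAut V) : V →* V) :=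
    hloc (hsup ▸ Subgroup.mem_top x)
  exact hx

include hV in
lemma exists_two_sigmas (hexp : ∀ v : V, v ^ p = 1) (Abar : Subgroup (MulAut V))
    (hA : ¬ ∃ S : Sylow p Abar, (S : Subgroup Abar).Normal) :
    ∃ σ τ : MulAut V, σ ∈ Abar ∧ τ ∈ Abar ∧ σ ≠ 1 ∧ τ ≠ 1 ∧ σ ^ p = 1 ∧ τ ^ p = 1 ∧
      (dmap σ).ker ≠ (dmap τ).ker := by
  classical
  by_contra hcon
  push_neg at hcon
  apply hA
  by_cases hex : ∃ σ : MulAut V, σ ∈ Abar ∧ σ ≠ 1 ∧ σ ^ p = 1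
  · obtain ⟨σ0, hσ0A, hσ01, hσ0p⟩ := hex
    set Q : Subgroup Abar := (zpowers σ0).subgroupOf Abar with hQdef
    have hmemQ : ∀ x : Abar, (∃ m, x ^ p ^ m = 1) → x ∈ Q := by
      intro x hx
      by_cases hx1 : x = 1
      · rw [hx1]; exact one_mem Q
      · have hx1' : (x : MulAut V) ≠ 1 := by
          intro h
          exact hx1 (Subtype.ext h)
        have hpel : ∃ m, (x : MulAut V) ^ p ^ m = 1 := by
          obtain ⟨m, hm⟩ := hx
          refine ⟨m, ?_⟩
          have := congrArg (Subtype.val) hm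
          rwa [SubgroupClass.coe_pow, OneMemClass.coe_one] at this
        obtain ⟨hK, hrk, hxp⟩ := sigma_struct hV hexp hx1' hpel
        obtain ⟨hKσ0, hrkσ0, _⟩ := sigma_struct hV hexp hσ01 ⟨1, by rwa [pow_one]⟩
        have hkers := hcon σ0 (x : MulAut V) hσ0A x.2 hσ01 hx1' hσ0p hxp
        obtain ⟨a, ha⟩ := eq_pow_of_same_ker hV hexp hσ01 hx1' hkers hKσ0 hrkσ0 hrk
        rw [hQdef, mem_subgroupOf, ha]
        exact pow_mem (mem_zpowers σ0) a
    have hQp : IsPGroup p Q := by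
      intro g
      refine ⟨1, ?_⟩
      obtain ⟨j, hj⟩ := Subgroup.mem_zpowers_iff.mp (mem_subgroupOf.mp g.2)
      have hc : ((g : Abar) : MulAut V) ^ p ^ 1 = 1 := by
        rw [pow_one, ← hj, ← zpow_natCast, ← zpow_mul, mul_comm, zpow_mul, zpow_natCast, hσ0p,
          one_zpow]
      apply Subtype.ext
      apply Subtype.ext
      rw [SubgroupClass.coe_pow, OneMemClass.coe_one, SubgroupClass.coe_pow,
        OneMemClass.coe_one]
      exact hc
    obtain ⟨S, hQS⟩ := hQp.exists_le_sylow
    have hSQ : (S : Subgroup Abar) = Q := by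
      apply le_antisymm _ hQS
      intro x hxS
      obtain ⟨m, hm⟩ := S.2 ⟨x, hxS⟩
      apply hmemQ x ⟨m, ?_⟩
      have := congrArg (Subtype.val) hm
      rwa [SubgroupClass.coe_pow, OneMemClass.coe_one] at this
    have hQnormal : Q.Normal := by
      constructor
      intro x hxQ g
      apply hmemQ
      obtain ⟨m, hm⟩ := hQp ⟨x, hxQ⟩
      have h1 : x ^ p ^ m = 1 := by
        have := congrArg (Subtype.val) hm
        rwa [SubgroupClass.coe_pow, OneMemClass.coe_one] at this
      refine ⟨m, ?_⟩
      have h2 : g * x * g⁻¹ = MulAut.conj g x := rfl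
      rw [h2, ← map_pow, h1, map_one]
    exact ⟨S, hSQ ▸ hQnormal⟩
  · push_neg at hex
    have hS : ∀ S : Sylow p Abar, (S : Subgroup Abar) = ⊥ := by
      intro S
      rw [eq_bot_iff]
      intro x hxS
      rw [Subgroup.mem_bot]
      by_contra hx1
      obtain ⟨m, hm⟩ := S.2 ⟨x, hxS⟩
      have h1 : x ^ p ^ m = 1 := by
        have := congrArg (Subtype.val) hm
        rwa [SubgroupClass.coe_pow, OneMemClass.coe_one] at this
      have hord : orderOf x ∣ p ^ m := orderOf_dvd_iff_pow_eq_one.mpr h1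
      obtain ⟨j, hj2, hjeq⟩ := (Nat.dvd_prime_pow hp.out).mp hord
      have hj1 : 1 ≤ j := by
        rcases Nat.eq_zero_or_pos j with h | h
        · exact absurd (orderOf_eq_one_iff.mp (by rw [hjeq, h, pow_zero])) hx1
        · exact h
      set y := x ^ p ^ (j - 1) with hydef
      have hyp : y ^ p = 1 := by
        rw [hydef, ← pow_mul, ← pow_succ, Nat.sub_add_cancel hj1, ← hjeq]
        exact pow_orderOf_eq_one x
      have hy1 : y ≠ 1 := by
        intro h
        have hdvd : orderOf x ∣ p ^ (j - 1) := orderOf_dvd_iff_pow_eq_one.mpr h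
        rw [hjeq] at hdvd
        have hle := (Nat.pow_dvd_pow_iff_le_right hp.out.one_lt).mp hdvd
        omega
      have hyp' : ((y : MulAut V)) ^ p = 1 := by
        have := congrArg (Subtype.val) hyp
        rwa [SubgroupClass.coe_pow, OneMemClass.coe_one] at this
      exact hex (y : MulAut V) y.2 (fun h => hy1 (Subtype.ext h)) hyp'
    obtain ⟨S⟩ := (inferInstance : Nonempty (Sylow p Abar))
    refine ⟨S, ?_⟩
    rw [hS S]
    infer_instance

include hV in
theorem transV (Abar : Subgroup (MulAut V))
    (hA : ¬ ∃ S : Sylow p Abar, (S : Subgroup Abar).Normal) :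
    ∀ M M' : Subgroup V, IsCoatom M → IsCoatom M' →
      ∃ α ∈ Abar, Subgroup.map (α : V →* V) M = M' := by
  classical
  by_cases hexp : ∀ v : V, v ^ p = 1
  · obtain ⟨σ, τ, hσA, hτA, hσ1, hτ1, hσp, hτp, hkers⟩ := exists_two_sigmas hV hexp Abar hA
    obtain ⟨hKσ, hrkσ, _⟩ := sigma_struct hV hexp hσ1 ⟨1, by rwa [pow_one]⟩
    obtain ⟨hKτ, hrkτ, _⟩ := sigma_struct hV hexp hτ1 ⟨1, by rwa [pow_one]⟩
    obtain ⟨v1, hv1K, hv11⟩ := exists_mem_ne_one_of_card hKσ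
    obtain ⟨v2, hv2K, hv21⟩ := exists_mem_ne_one_of_card hKτ
    set x0 := v1 * v2 with hx0def
    have same_ker_contra : v2 ∈ (dmap σ).ker → False := by
      intro hv2σ
      exact hkers (by
        rw [eq_zpowers_of_card hKσ hv2σ hv21, ← eq_zpowers_of_card hKτ hv2K hv21])
    have hx01 : x0 ≠ 1 := by
      intro h
      apply same_ker_contra
      rw [hx0def] at h
      rw [eq_inv_of_mul_eq_one_right h]
      exact inv_mem hv1K
    have hX0 : IsCoatom (zpowers x0) := (coatom_iff_card hV).mpr (card_line hx01 (hexp x0))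
    have hX0σ : zpowers x0 ≠ (dmap σ).ker := by
      intro h
      apply same_ker_contra
      have hx0K : x0 ∈ (dmap σ).ker := h ▸ mem_zpowers x0
      have hv2 : v2 = v1⁻¹ * x0 := by rw [hx0def, inv_mul_cancel_left]
      rw [hv2]
      exact mul_mem (inv_mem hv1K) hx0K
    have hX0τ : zpowers x0 ≠ (dmap τ).ker := by
      intro h
      have hx0K : x0 ∈ (dmap τ).ker := h ▸ mem_zpowers x0
      have hv1' : v1 ∈ (dmap τ).ker := by
        have hv1e : v1 = x0 * v2⁻¹ := by rw [hx0def, mul_inv_cancel_right]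
        rw [hv1e]
        exact mul_mem hx0K (inv_mem hv2K)
      exact hkers (by
        rw [eq_zpowers_of_card hKσ hv1K hv11, ← eq_zpowers_of_card hKτ hv1' hv11])
    have hreach : ∀ M : Subgroup V, IsCoatom M →
        ∃ α ∈ Abar, Subgroup.map (α : V →* V) M = zpowers x0 := by
      intro M hM
      by_cases hMσ : M = (dmap σ).ker
      · have hMτ : M ≠ (dmap τ).ker := by
          rw [hMσ]
          exact hkers
        obtain ⟨i, hi⟩ := sigma_reach hV hexp hτ1 hKτ hrkτ hM hX0 hMτ hX0τ
        exact ⟨τ ^ i, pow_mem hτA i, hi⟩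
      · obtain ⟨i, hi⟩ := sigma_reach hV hexp hσ1 hKσ hrkσ hM hX0 hMσ hX0σ
        exact ⟨σ ^ i, pow_mem hσA i, hi⟩
    intro M M' hM hM'
    obtain ⟨α, hαA, hα⟩ := hreach M hM
    obtain ⟨α', hα'A, hα'⟩ := hreach M' hM'
    refine ⟨α'⁻¹ * α, mul_mem (inv_mem hα'A) hαA, ?_⟩
    have hcomp : ((α'⁻¹ * α : MulAut V) : V →* V)
        = ((α'⁻¹ : MulAut V) : V →* V).comp (α : V →* V) := by
      ext x
      rfl
    rw [hcomp, ← Subgroup.map_map, hα, ← hα', Subgroup.map_map]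
    have h2 : ((α'⁻¹ : MulAut V) : V →* V).comp ((α' : MulAut V) : V →* V)
        = MonoidHom.id V := by
      ext x
      show (α'⁻¹ : MulAut V) (α' x) = x
      rw [MulAut.inv_def]
      exact α'.symm_apply_apply x
    rw [h2, Subgroup.map_id]
  · push_neg at hexp
    obtain ⟨v, hv⟩ := hexp
    set T : Subgroup V :=
      { carrier := {x | x ^ p = 1}
        one_mem' := one_pow p
        mul_mem' := fun {a b} ha hb => by
          simp only [Set.mem_setOf_eq] at *
          rw [mul_pow, ha, hb, mul_one]
        inv_mem' := fun {a} ha => by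
          simp only [Set.mem_setOf_eq] at *
          rw [inv_pow, ha, inv_one] } with hTdef
    have hcoatomT : ∀ M : Subgroup V, IsCoatom M → M = T := by
      intro M hM
      have hcard := (coatom_iff_card hV).mp hM
      have hle : M ≤ T := by
        intro x hx
        have h := orderOf_dvd_natCard (⟨x, hx⟩ : M)
        rw [hcard, ← Subgroup.orderOf_coe] at h
        exact orderOf_dvd_iff_pow_eq_one.mp h
      have hTne : T ≠ ⊤ := by
        intro h
        exact hv (h ▸ Subgroup.mem_top v : v ∈ T)
      rcases eq_or_lt_of_le hle with h | h
      · exact h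
      · exact absurd (hM.2 T h) hTne
    intro M M' hM hM'
    refine ⟨1, one_mem Abar, ?_⟩
    rw [hcoatomT M hM, hcoatomT M' hM']
    have h1 : ((1 : MulAut V) : V →* V) = MonoidHom.id V := rfl
    rw [h1, Subgroup.map_id]

end VSide
section Main

open Subgroup

theorem stmt_8 {P : Type*} [Group P] [Finite P] (p : ℕ) [Fact p.Prime]
    (hpgrp : IsPGroup p P) (hfr : Nat.card (P ⧸ frattini P) = p ^ 2)
    (A : Subgroup (MulAut P))
    (hA : ¬ ∃ Q : Sylow p A, (Q : Subgroup A).Normal) :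
    (∀ M M' : Subgroup P, IsCoatom M → IsCoatom M' →
      ∃ α ∈ A, M.map α.toMonoidHom = M') ∧
    (∀ M M' : Subgroup P, IsCoatom M → IsCoatom M' → Nonempty (M ≃* M')) := by
  classical
  haveI := finiteMulAut P
  haveI := finiteMulAut (P ⧸ frattini P)
  have hcomm := IsPGroup.commutative_of_card_eq_prime_sq (G := P ⧸ frattini P) (p := p) hfr
  letI cg : CommGroup (P ⧸ frattini P) :=
    { (inferInstance : Group (P ⧸ frattini P)) with mul_comm := hcomm }
  set f : A →* MulAut (P ⧸ frattini P) := (fbar (P := P)).comp A.subtype with hfdef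
  have hkerf : IsPGroup p f.ker := by
    have h1 : f.ker = ((fbar (P := P)).ker).comap A.subtype := by
      rw [hfdef]
      exact (MonoidHom.comap_ker _ _).symm
    rw [h1]
    exact IsPGroup.comap_of_injective (ker_fbar_isPGroup hpgrp) A.subtype
      (Subgroup.subtype_injective A)
  have hAbar : ¬ ∃ S : Sylow p f.range, (S : Subgroup f.range).Normal := by
    rintro ⟨S, hS⟩
    apply hA
    apply pclosed_of_surjective f.rangeRestrict f.rangeRestrict_surjective ?_ S hS
    rw [MonoidHom.ker_rangeRestrict]
    exact hkerf
  have htrans := transV (V := P ⧸ frattini P) (p := p) hfr f.range hAbar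
  set π : P →* P ⧸ frattini P := QuotientGroup.mk' (frattini P) with hπ
  have hπs : Function.Surjective π := QuotientGroup.mk'_surjective (frattini P)
  have hπk : π.ker = frattini P := QuotientGroup.ker_mk' (frattini P)
  have main : ∀ M M' : Subgroup P, IsCoatom M → IsCoatom M' →
      ∃ α ∈ A, M.map α.toMonoidHom = M' := by
    intro M M' hM hM'
    have hkM : π.ker ≤ M := hπk.trans_le (frattini_le_coatom hM)
    have hkM' : π.ker ≤ M' := hπk.trans_le (frattini_le_coatom hM')
    obtain ⟨ab, habmem, hmap⟩ := htrans (M.map π) (M'.map π)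
      (isCoatom_map_of_surjective π hπs hkM hM) (isCoatom_map_of_surjective π hπs hkM' hM')
    obtain ⟨a, rfl⟩ := MonoidHom.mem_range.mp habmem
    refine ⟨(a : MulAut P), a.2, ?_⟩
    show M.map ((a : MulAut P) : P →* P) = M'
    have hcommute : π.comp ((a : MulAut P) : P →* P)
        = ((f a : MulAut (P ⧸ frattini P)) : (P ⧸ frattini P) →* (P ⧸ frattini P)).comp π := by
      ext x
      exact (fbar_mk (a : MulAut P) x).symm
    have h1 : (M.map ((a : MulAut P) : P →* P)).map π = M'.map π := by
      rw [Subgroup.map_map, hcommute, ← Subgroup.map_map]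
      exact hmap
    have hk2 : π.ker ≤ M.map ((a : MulAut P) : P →* P) := by
      rw [hπk]
      have hfr2 : frattini P = (frattini P).map ((a : MulAut P) : P →* P) :=
        (Subgroup.characteristic_iff_map_eq.mp inferInstance _).symm
      rw [hfr2]
      exact Subgroup.map_mono (frattini_le_coatom hM)
    calc M.map ((a : MulAut P) : P →* P)
        = ((M.map ((a : MulAut P) : P →* P)).map π).comap π :=
          (Subgroup.comap_map_eq_self hk2).symm
      _ = (M'.map π).comap π := by rw [h1]
      _ = M' := Subgroup.comap_map_eq_self hkM'
  refine ⟨main, fun M M' hM hM' => ?_⟩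
  obtain ⟨α, hαA, h⟩ := main M M' hM hM'
  exact ⟨(Subgroup.equivMapOfInjective M α.toMonoidHom α.injective).trans
    (MulEquiv.subgroupCongr h)⟩

end Main
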